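/- The finite set E_A = {(a_L,a_R), (c_L,c_R), (p̄_L^A, p̄_R^A)}, where (p̄_L^A, p̄_R^A) is the unique pair with H_L(p̄_L^A)=H_L⁻(p̄_L^A)=A=H_R⁺(p̄_R^A)=H_R(p̄_R^A), generates G_A on the box Q=[a_L,c_L]×[a_R,c_R]: for any (k_L,k_R) ∈ Q, if q_L(k_L, k̄_L) − q_R(k_R, k̄_R) ≥ 0 for all (k̄_L,k̄_R) ∈ E_A, then (k_L,k_R) ∈ G_A, where q_α(q,p) = sgn(q−p)(H_α(q)−H_α(p)). -/
import Mathlib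


open Set

/-- Auxiliary: a function decreasing then increasing with zero endpoints is
nonpositive, and vanishes only at the endpoints. -/
lemma aux_neg_on (a b c : ℝ) (H : ℝ → ℝ) (hab : a < b) (hbc : b < c)
    (hdec : StrictAntiOn H (Icc a b)) (hinc : StrictMonoOn H (Icc b c))
    (h0a : H a = 0) (h0c : H c = 0) :
    ∀ x ∈ Icc a c, H x ≤ 0 ∧ (H x = 0 → x = a ∨ x = c) := by
  intro x hx
  rcases le_total x b with h | h
  · rcases eq_or_lt_of_le hx.1 with h' | h'
    · exact ⟨by rw [← h', h0a], fun _ => Or.inl h'.symm⟩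
    · have hlt := hdec ⟨le_refl a, hab.le⟩ ⟨hx.1, h⟩ h'
      rw [h0a] at hlt
      exact ⟨hlt.le, fun hc => absurd hc hlt.ne⟩
  · rcases eq_or_lt_of_le hx.2 with h' | h'
    · exact ⟨by rw [h', h0c], fun _ => Or.inr h'⟩
    · have hlt := hinc ⟨h, hx.2⟩ ⟨hbc.le, le_refl c⟩ h'
      rw [h0c] at hlt
      exact ⟨hlt.le, fun hc => absurd hc hlt.ne⟩

/-- The three-element set $\mathcal E_A$ generates the germ $\mathcal G_A$ on the box $Q$. -/
theorem germ_generated_by_EA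
    (aL bL cL aR bR cR δ A : ℝ)
    (HL HR : ℝ → ℝ)
    (haL : aL < bL) (hbL : bL < cL) (haR : aR < bR) (hbR : bR < cR)
    (hδ : 0 < δ)
    (hCL : ContDiffOn ℝ 2 HL (Icc aL cL)) (hCR : ContDiffOn ℝ 2 HR (Icc aR cR))
    (hconvL : ∀ x ∈ Icc aL cL, δ ≤ deriv (deriv HL) x)
    (hconvR : ∀ x ∈ Icc aR cR, δ ≤ deriv (deriv HR) x)
    (hdecL : StrictAntiOn HL (Icc aL bL)) (hincL : StrictMonoOn HL (Icc bL cL))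
    (hdecR : StrictAntiOn HR (Icc aR bR)) (hincR : StrictMonoOn HR (Icc bR cR))
    (h0La : HL aL = 0) (h0Lc : HL cL = 0) (h0Ra : HR aR = 0) (h0Rc : HR cR = 0)
    (hA : A ∈ Icc (max (HL bL) (HR bR)) 0)
    (GA : Set (ℝ × ℝ))
    (hGA : GA = {k : ℝ × ℝ | k.1 ∈ Icc aL cL ∧ k.2 ∈ Icc aR cR ∧
        HR k.2 = HL k.1 ∧
        HL k.1 = max (max A (HL (max k.1 bL))) (HR (min k.2 bR))})
    (pbarL pbarR : ℝ)
    (hpbarLmem : pbarL ∈ Icc aL cL) (hpbarRmem : pbarR ∈ Icc aR cR)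
    (hpbarL : HL pbarL = A) (hpbarLenv : HL (min pbarL bL) = A)
    (hpbarR : HR pbarR = A) (hpbarRenv : HR (max pbarR bR) = A) :
    ∀ k : ℝ × ℝ, k.1 ∈ Icc aL cL → k.2 ∈ Icc aR cR →
      (∀ k' ∈ ({(aL, aR), (cL, cR), (pbarL, pbarR)} : Set (ℝ × ℝ)),
        Real.sign (k.2 - k'.2) * (HR k.2 - HR k'.2) ≤
          Real.sign (k.1 - k'.1) * (HL k.1 - HL k'.1)) →
      k ∈ GA := by
  intro k hkL hkR hE
  obtain ⟨kL, kR⟩ := k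
  dsimp only at hkL hkR hE
  have hNL := aux_neg_on aL bL cL HL haL hbL hdecL hincL h0La h0Lc
  have hNR := aux_neg_on aR bR cR HR haR hbR hdecR hincR h0Ra h0Rc
  have hfle : HL kL ≤ 0 := (hNL kL hkL).1
  have hgle : HR kR ≤ 0 := (hNR kR hkR).1
  have h1 := hE (aL, aR) (by simp)
  have h2 := hE (cL, cR) (by simp)
  have h3 := hE (pbarL, pbarR) (by simp)
  dsimp only at h1 h2 h3
  rw [h0La, h0Ra, sub_zero, sub_zero] at h1
  rw [h0Lc, h0Rc, sub_zero, sub_zero] at h2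
  rw [hpbarL, hpbarR] at h3
  -- position of pbarL, pbarR
  have hpLb : pbarL ≤ bL := by
    by_contra h
    push_neg at h
    rw [min_eq_right h.le] at hpbarLenv
    have hlt := hincL ⟨le_refl bL, hbL.le⟩ ⟨h.le, hpbarLmem.2⟩ h
    rw [hpbarLenv, hpbarL] at hlt
    exact lt_irrefl A hlt
  have hpRb : bR ≤ pbarR := by
    by_contra h
    push_neg at h
    rw [max_eq_right h.le] at hpbarRenv
    have hlt := hdecR ⟨hpbarRmem.1, h.le⟩ ⟨haR.le, le_refl bR⟩ h
    rw [hpbarRenv, hpbarR] at hlt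
    exact lt_irrefl A hlt
  -- first germ condition: HL kL = HR kR
  have feg : HL kL = HR kR := by
    apply le_antisymm
    · -- uses the (cL, cR) inequality
      rcases eq_or_lt_of_le hkL.2 with hc | hc
      · have hf0 : HL kL = 0 := by rw [hc, h0Lc]
        rw [hf0]
        rcases eq_or_lt_of_le hkR.2 with hc' | hc'
        · rw [hc', h0Rc]
        · have s1 : Real.sign (kR - cR) = -1 := Real.sign_of_neg (by linarith)
          have s2 : Real.sign (kL - cL) = 0 := by rw [hc, sub_self, Real.sign_zero]
          rw [s1, s2] at h2
          linarith
      · rcases eq_or_lt_of_le hkR.2 with hc' | hc'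
        · have hg0 : HR kR = 0 := by rw [hc', h0Rc]
          rw [hg0]; exact hfle
        · have s1 : Real.sign (kR - cR) = -1 := Real.sign_of_neg (by linarith)
          have s2 : Real.sign (kL - cL) = -1 := Real.sign_of_neg (by linarith)
          rw [s1, s2] at h2
          linarith
    · -- uses the (aL, aR) inequality
      rcases eq_or_lt_of_le hkL.1 with ha | ha
      · have hf0 : HL kL = 0 := by rw [← ha, h0La]
        rw [hf0]; exact hgle
      · rcases eq_or_lt_of_le hkR.1 with ha' | ha'
        · have hg0 : HR kR = 0 := by rw [← ha', h0Ra]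
          have s1 : Real.sign (kR - aR) = 0 := by rw [← ha', sub_self, Real.sign_zero]
          have s2 : Real.sign (kL - aL) = 1 := Real.sign_of_pos (by linarith)
          rw [s1, s2] at h1
          rw [hg0]; linarith
        · have s1 : Real.sign (kR - aR) = 1 := Real.sign_of_pos (by linarith)
          have s2 : Real.sign (kL - aL) = 1 := Real.sign_of_pos (by linarith)
          rw [s1, s2] at h1
          linarith
  -- A ≤ HL kL
  have hfA : A ≤ HL kL := by
    by_contra h
    push_neg at h
    have hgA : HR kR < A := by rw [← feg]; exact h
    have hkLp : pbarL < kL := by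
      by_contra h2'
      push_neg at h2'
      rcases eq_or_lt_of_le h2' with he | hl
      · rw [he, hpbarL] at h; exact lt_irrefl A h
      · have hlt := hdecL ⟨hkL.1, by linarith⟩ ⟨hpbarLmem.1, hpLb⟩ hl
        rw [hpbarL] at hlt; linarith
    have hkRp : kR < pbarR := by
      by_contra h2'
      push_neg at h2'
      have hle := (hincR.monotoneOn) ⟨hpRb, hpbarRmem.2⟩ ⟨by linarith, hkR.2⟩ h2'
      rw [hpbarR] at hle; linarith
    have s1 : Real.sign (kR - pbarR) = -1 := Real.sign_of_neg (by linarith)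
    have s2 : Real.sign (kL - pbarL) = 1 := Real.sign_of_pos (by linarith)
    rw [s1, s2] at h3
    linarith
  -- monotone-envelope bounds
  have hfL : HL (max kL bL) ≤ HL kL := by
    rcases le_total bL kL with h | h
    · rw [max_eq_left h]
    · rw [max_eq_right h]
      exact (hdecL.antitoneOn) ⟨hkL.1, h⟩ ⟨haL.le, le_refl bL⟩ h
  have hfR : HR (min kR bR) ≤ HR kR := by
    rcases le_total kR bR with h | h
    · rw [min_eq_left h]
    · rw [min_eq_right h]
      exact (hincR.monotoneOn) ⟨le_refl bR, hbR.le⟩ ⟨h, hkR.2⟩ h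
  rw [hGA]
  refine ⟨hkL, hkR, feg.symm, ?_⟩
  apply le_antisymm
  · -- HL kL ≤ max ...
    rcases le_total bL kL with h | h
    · have : HL kL ≤ max A (HL (max kL bL)) := by
        rw [max_eq_left h]; exact le_max_right _ _
      exact le_trans this (le_max_left _ _)
    · rcases le_total kR bR with h' | h'
      · have : HL kL ≤ HR (min kR bR) := by rw [min_eq_left h', ← feg]
        exact le_trans this (le_max_right _ _)
      · have hAf : HL kL ≤ A := by
          by_contra hc
          push_neg at hc
          rcases eq_or_lt_of_le h with he | hl
          · have : HL bL ≤ A := le_trans (le_max_left _ _) hA.1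
            rw [← he] at this; linarith
          · rcases eq_or_lt_of_le h' with he' | hl'
            · have : HR bR ≤ A := le_trans (le_max_right _ _) hA.1
              rw [he'] at this; linarith [feg]
            · have hkLp : kL < pbarL := by
                by_contra h2'
                push_neg at h2'
                have hle := (hdecL.antitoneOn) ⟨hpbarLmem.1, hpLb⟩ ⟨hkL.1, hl.le⟩ h2'
                rw [hpbarL] at hle; linarith
              have hkRp : pbarR < kR := by
                by_contra h2'
                push_neg at h2'
                have hle := (hincR.monotoneOn) ⟨hl'.le, hkR.2⟩ ⟨hpRb, hpbarRmem.2⟩ h2'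
                rw [hpbarR] at hle; linarith [feg]
              have s1 : Real.sign (kR - pbarR) = 1 := Real.sign_of_pos (by linarith)
              have s2 : Real.sign (kL - pbarL) = -1 := Real.sign_of_neg (by linarith)
              rw [s1, s2] at h3
              linarith [feg]
        exact le_trans hAf (le_trans (le_max_left _ _) (le_max_left _ _))
  · exact max_le (max_le hfA hfL) (by rw [feg]; exact hfR)
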